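/- Let f : ℝ^N → ℝ be continuously differentiable and suppose a differentiable curve θ(t) satisfies the scalar ODE relation: ḟ(θ(t)) = g(t)(1 - f(θ(t))) whenever f(θ(t)) > 0 and g(t) > 0, and ḟ(θ(t)) = g(t) ≤ 0 otherwise (g(t) := y(t)ᵀΓ∇f(θ(t))). If f(θ(t₀)) ≤ 1, then f(θ(t)) ≤ 1 for all t ≥ t₀. -/

import Mathlib

open RealInnerProductSpace
open scoped Classical in
/-- Lemma 8 (scalar invariance): under the Γ-projection update θ̇ = Proj_Γ(θ, y, f),
the sublevel set {f ≤ 1} is invariant: if f(θ(t₀)) ≤ 1 then f(θ(t)) ≤ 1 for t ≥ t₀,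
where g(t) = y(t)ᵀΓ∇f(θ(t)). -/
theorem proj_f_invariant {N : ℕ} (t₀ : ℝ)
    (f : EuclideanSpace ℝ (Fin N) → ℝ) (hf1 : ContDiff ℝ 1 f)
    (Γ : Matrix (Fin N) (Fin N) ℝ) (hΓsym : Γ.IsSymm) (hΓpd : Γ.PosDef)
    (θ y : ℝ → EuclideanSpace ℝ (Fin N)) (hθ : Differentiable ℝ θ) (hy : Continuous y)
    (g : ℝ → ℝ)
    (hg : ∀ t, g t = ⟪y t, Matrix.toEuclideanLin Γ (gradient f (θ t))⟫)
    (hderiv : ∀ t, t₀ ≤ t →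
      if 0 < f (θ t) ∧ 0 < g t then
        HasDerivAt (fun s => f (θ s)) (g t * (1 - f (θ t))) t
      else HasDerivAt (fun s => f (θ s)) (g t) t ∧ g t ≤ 0)
    (hinit : f (θ t₀) ≤ 1) :
    ∀ t, t₀ ≤ t → f (θ t) ≤ 1 := by
  intro t ht
  set h : ℝ → ℝ := fun s => f (θ s) with hh
  -- derivative of h at each x ≥ t₀
  set h' : ℝ → ℝ := fun x => if 0 < h x ∧ 0 < g x then g x * (1 - h x) else g x with hh'
  have hD : ∀ x, t₀ ≤ x → HasDerivAt h (h' x) x := by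
    intro x hx
    have := hderiv x hx
    by_cases hc : 0 < f (θ x) ∧ 0 < g x
    · simp only [hc, if_true] at this
      simpa [hh', hh, hc] using this
    · simp only [hc, if_false] at this
      simpa [hh', hh, hc] using this.1
  -- the derivative is nonpositive whenever h x > 1
  have hneg : ∀ x, t₀ ≤ x → 1 < h x → h' x ≤ 0 := by
    intro x hx h1
    by_cases hc : 0 < h x ∧ 0 < g x
    · have : g x * (1 - h x) ≤ 0 := by
        apply mul_nonpos_of_nonneg_of_nonpos hc.2.le (by linarith)
      simpa [hh', hc] using this
    · have := hderiv x hx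
      rw [if_neg hc] at this
      simpa [hh', hc] using this.2
  -- comparison with B ε
  have key : ∀ ε : ℝ, 0 < ε → h t ≤ 1 + ε * (1 + (t - t₀)) := by
    intro ε hε
    have := image_le_of_deriv_right_lt_deriv_boundary'
      (f := h) (f' := h') (a := t₀) (b := t)
      (B := fun x => 1 + ε * (1 + (x - t₀))) (B' := fun _ => ε)
      (fun x hx => ((hD x hx.1).continuousAt).continuousWithinAt)
      (fun x hx => ((hD x hx.1).hasDerivWithinAt))
      (by simpa using le_trans hinit (by linarith))
      (by fun_prop)
      (fun x hx => by
        have : HasDerivAt (fun x : ℝ => 1 + ε * (1 + (x - t₀))) ε x := by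
          simpa using (((hasDerivAt_id x).sub_const t₀).const_add (1:ℝ)).const_mul ε |>.const_add (1:ℝ)
        exact this.hasDerivWithinAt)
      (fun x hx hxe => by
        have h1 : 1 < h x := by
          have hx0 : t₀ ≤ x := hx.1
          rw [hxe]; nlinarith
        exact lt_of_le_of_lt (hneg x hx.1 h1) hε)
    exact this (Set.right_mem_Icc.2 ht)
  -- let ε → 0
  have hc : (0:ℝ) < 1 + (t - t₀) := by linarith
  by_contra hlt
  push_neg at hlt
  have hε : 0 < (h t - 1) / (2 * (1 + (t - t₀))) := div_pos (by linarith) (by linarith)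
  have := key _ hε
  have : h t ≤ 1 + (h t - 1) / 2 := by
    have : (h t - 1) / (2 * (1 + (t - t₀))) * (1 + (t - t₀)) = (h t - 1) / 2 := by
      field_simp
    linarith [key _ hε, this ▸ key _ hε]
  linarith
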